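/- Let γ be real, s(x) = ∫₀ˣ e^{−γu} du, m′(y) = e^{γy}/(y(1−y)) for 0 < y < 1, and g(x,y) = (s(1) − s(max(x,y)))·s(min(x,y))/s(1). Then there exists a constant C, depending only on γ, with the following property: for every real λ > 0 and every measurable α : [0,1] → ℝ such that ∫₀¹ α(y)²·m′(y) dy = 1 and α(x) = λ·∫₀¹ g(x,y)·α(y)·m′(y) dy for all x ∈ [0,1], one has |α(x)| ≤ C·λ²·x·(1−x) for all x ∈ [0,1]. -/

import Mathlib

open MeasureTheory Set

/-- The scale function `s(x) = ∫₀ˣ e^{−γu} du`. -/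
noncomputable def sFn (γ x : ℝ) : ℝ := ∫ u in (0 : ℝ)..x, Real.exp (-(γ * u))

/-- The speed density `m′(y) = e^{γy}/(y(1−y))`. -/
noncomputable def mDens (γ y : ℝ) : ℝ := Real.exp (γ * y) / (y * (1 - y))

/-- The Green function `g(x,y) = (s(1) − s(max x y)) s(min x y)/s(1)`. -/
noncomputable def gFn (γ x y : ℝ) : ℝ :=
  (sFn γ 1 - sFn γ (max x y)) * sFn γ (min x y) / sFn γ 1

namespace GreenAux

lemma exp_cont (γ : ℝ) : Continuous fun u : ℝ => Real.exp (-(γ * u)) := by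
  fun_prop

lemma exp_intble (γ a b : ℝ) :
    IntervalIntegrable (fun u : ℝ => Real.exp (-(γ * u))) volume a b :=
  (exp_cont γ).intervalIntegrable a b

lemma sFn_zero (γ : ℝ) : sFn γ 0 = 0 := intervalIntegral.integral_same

lemma sFn_sub (γ a b : ℝ) :
    sFn γ b - sFn γ a = ∫ u in a..b, Real.exp (-(γ * u)) := by
  unfold sFn
  rw [← intervalIntegral.integral_add_adjacent_intervals (exp_intble γ 0 a) (exp_intble γ a b)]
  ring

lemma sFn_mono (γ : ℝ) {a b : ℝ} (hab : a ≤ b) : sFn γ a ≤ sFn γ b := by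
  have h : 0 ≤ sFn γ b - sFn γ a := by
    rw [sFn_sub]
    exact intervalIntegral.integral_nonneg hab fun u _ => (Real.exp_pos _).le
  linarith

lemma sFn_nonneg (γ : ℝ) {a : ℝ} (ha : 0 ≤ a) : 0 ≤ sFn γ a := by
  have := sFn_mono γ ha
  rwa [sFn_zero] at this

lemma exp_le (γ : ℝ) {u : ℝ} (h0 : 0 ≤ u) (h1 : u ≤ 1) :
    Real.exp (-(γ * u)) ≤ Real.exp |γ| := by
  apply Real.exp_le_exp.2
  calc -(γ * u) ≤ |γ * u| := neg_le_abs _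
    _ = |γ| * |u| := abs_mul _ _
    _ ≤ |γ| * 1 := by
        have : |u| ≤ 1 := by rw [abs_of_nonneg h0]; exact h1
        exact mul_le_mul_of_nonneg_left this (abs_nonneg _)
    _ = |γ| := mul_one _

lemma sFn_sub_le (γ : ℝ) {a b : ℝ} (h0 : 0 ≤ a) (hab : a ≤ b) (hb : b ≤ 1) :
    sFn γ b - sFn γ a ≤ (b - a) * Real.exp |γ| := by
  rw [sFn_sub]
  calc (∫ u in a..b, Real.exp (-(γ * u)))
      ≤ ∫ _u in a..b, Real.exp |γ| := by
        apply intervalIntegral.integral_mono_on hab (exp_intble γ a b)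
          (intervalIntegrable_const)
        intro u hu
        exact exp_le γ (le_trans h0 hu.1) (le_trans hu.2 hb)
    _ = (b - a) * Real.exp |γ| := by
        rw [intervalIntegral.integral_const, smul_eq_mul]

lemma sFn_le (γ : ℝ) {a : ℝ} (h0 : 0 ≤ a) (h1 : a ≤ 1) :
    sFn γ a ≤ a * Real.exp |γ| := by
  have := sFn_sub_le γ le_rfl h0 h1
  rw [sFn_zero] at this
  linarith

lemma sFn_one_pos (γ : ℝ) : 0 < sFn γ 1 :=
  intervalIntegral.intervalIntegral_pos_of_pos (exp_intble γ 0 1)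
    (fun u => Real.exp_pos _) one_pos

lemma gFn_nonneg (γ : ℝ) {x y : ℝ} (hx : x ∈ Icc (0:ℝ) 1) (hy : y ∈ Icc (0:ℝ) 1) :
    0 ≤ gFn γ x y := by
  have hM1 : max x y ≤ 1 := max_le hx.2 hy.2
  have hm0 : 0 ≤ min x y := le_min hx.1 hy.1
  apply div_nonneg _ (sFn_one_pos γ).le
  exact mul_nonneg (by linarith [sFn_mono γ hM1]) (sFn_nonneg γ hm0)

lemma gFn_le (γ : ℝ) {x y : ℝ} (hx : x ∈ Icc (0:ℝ) 1) (hy : y ∈ Icc (0:ℝ) 1) :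
    gFn γ x y ≤ (Real.exp |γ|) ^ 2 / sFn γ 1 * (min x y * (1 - max x y)) := by
  have hM0 : 0 ≤ max x y := le_trans hx.1 (le_max_left x y)
  have hM1 : max x y ≤ 1 := max_le hx.2 hy.2
  have hm0 : 0 ≤ min x y := le_min hx.1 hy.1
  have hm1 : min x y ≤ 1 := le_trans (min_le_left x y) hx.2
  have f1 : sFn γ 1 - sFn γ (max x y) ≤ (1 - max x y) * Real.exp |γ| :=
    sFn_sub_le γ hM0 hM1 le_rfl
  have f2 : sFn γ (min x y) ≤ min x y * Real.exp |γ| := sFn_le γ hm0 hm1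
  have hnum : (sFn γ 1 - sFn γ (max x y)) * sFn γ (min x y)
      ≤ ((1 - max x y) * Real.exp |γ|) * (min x y * Real.exp |γ|) := by
    apply mul_le_mul f1 f2 (sFn_nonneg γ hm0)
    exact mul_nonneg (by linarith) (Real.exp_pos _).le
  calc gFn γ x y = (sFn γ 1 - sFn γ (max x y)) * sFn γ (min x y) / sFn γ 1 := rfl
    _ ≤ ((1 - max x y) * Real.exp |γ|) * (min x y * Real.exp |γ|) / sFn γ 1 := by
        rw [div_eq_mul_inv, div_eq_mul_inv]
        exact mul_le_mul_of_nonneg_right hnum (inv_nonneg.2 (sFn_one_pos γ).le)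
    _ = (Real.exp |γ|) ^ 2 / sFn γ 1 * (min x y * (1 - max x y)) := by ring

lemma minmax_le_left {x y : ℝ} (hx : x ∈ Icc (0:ℝ) 1) (hy : y ∈ Icc (0:ℝ) 1) :
    min x y * (1 - max x y) ≤ x * (1 - x) := by
  have hm0 : 0 ≤ min x y := le_min hx.1 hy.1
  have h1 : min x y ≤ x := min_le_left x y
  have h2 : 1 - max x y ≤ 1 - x := by
    have := le_max_left x y; linarith
  have h3 : 0 ≤ 1 - max x y := by
    have := max_le hx.2 hy.2; linarith
  nlinarith

lemma minmax_le_sqrt {x y : ℝ} (hx : x ∈ Icc (0:ℝ) 1) (hy : y ∈ Icc (0:ℝ) 1) :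
    min x y * (1 - max x y) ≤ Real.sqrt (x * (1 - x)) * Real.sqrt (y * (1 - y)) := by
  have hm0 : 0 ≤ min x y * (1 - max x y) := by
    apply mul_nonneg (le_min hx.1 hy.1)
    have := max_le hx.2 hy.2; linarith
  have h1 : min x y * (1 - max x y) ≤ x * (1 - x) := minmax_le_left hx hy
  have h2 : min x y * (1 - max x y) ≤ y * (1 - y) := by
    rw [min_comm, max_comm]; exact minmax_le_left hy hx
  have := Real.sqrt_le_sqrt (show (min x y * (1 - max x y)) * (min x y * (1 - max x y))
      ≤ (x * (1-x)) * (y * (1-y)) from mul_le_mul h1 h2 hm0 (by linarith [hx.1, hx.2] : 0 ≤ x * (1-x)))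
  calc min x y * (1 - max x y)
      = Real.sqrt ((min x y * (1 - max x y)) * (min x y * (1 - max x y))) :=
        (Real.sqrt_mul_self hm0).symm
    _ ≤ Real.sqrt ((x * (1-x)) * (y * (1-y))) := this
    _ = Real.sqrt (x * (1-x)) * Real.sqrt (y * (1-y)) :=
        Real.sqrt_mul (by nlinarith [hx.1, hx.2]) _

lemma sqrt_le_half (y : ℝ) : Real.sqrt (y * (1 - y)) ≤ 1/2 := by
  have h : y * (1 - y) ≤ (1/2 : ℝ)^2 := by nlinarith [sq_nonneg (y - 1/2)]
  calc Real.sqrt (y * (1 - y)) ≤ Real.sqrt ((1/2:ℝ)^2) := Real.sqrt_le_sqrt h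
    _ = 1/2 := Real.sqrt_sq (by norm_num)

/-- The dominating function. -/
noncomputable def B (γ y : ℝ) : ℝ := Real.exp (γ * y) * (Real.sqrt (y * (1 - y)))⁻¹

lemma B_nonneg (γ y : ℝ) : 0 ≤ B γ y :=
  mul_nonneg (Real.exp_pos _).le (inv_nonneg.2 (Real.sqrt_nonneg _))

lemma B_meas (γ : ℝ) : Measurable (B γ) := by
  unfold B; fun_prop

lemma invsqrt_intble : IntervalIntegrable (fun y : ℝ => (Real.sqrt y)⁻¹) volume 0 (1/2) := by
  apply IntervalIntegrable.mono_fun' (g := fun y : ℝ => y ^ (-(1/2) : ℝ))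
  · exact intervalIntegral.intervalIntegrable_rpow' (by norm_num)
  · exact (Real.continuous_sqrt.measurable.inv).aestronglyMeasurable
  · refine (ae_restrict_iff' measurableSet_uIoc).2 (.of_forall fun y hy => ?_)
    rw [uIoc_of_le (by norm_num : (0:ℝ) ≤ 1/2)] at hy
    show ‖(Real.sqrt y)⁻¹‖ ≤ y ^ (-(1/2) : ℝ)
    rw [Real.norm_eq_abs, abs_of_nonneg (inv_nonneg.2 (Real.sqrt_nonneg y)),
      Real.sqrt_eq_rpow, ← Real.rpow_neg hy.1.le]

lemma B_intble_left (γ : ℝ) : IntervalIntegrable (B γ) volume 0 (1/2) := by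
  apply IntervalIntegrable.mono_fun'
    (g := fun y : ℝ => (Real.exp |γ| * Real.sqrt 2) * (Real.sqrt y)⁻¹)
  · exact invsqrt_intble.const_mul _
  · exact (B_meas γ).aestronglyMeasurable
  · refine (ae_restrict_iff' measurableSet_uIoc).2 (.of_forall fun y hy => ?_)
    rw [uIoc_of_le (by norm_num : (0:ℝ) ≤ 1/2)] at hy
    show ‖B γ y‖ ≤ (Real.exp |γ| * Real.sqrt 2) * (Real.sqrt y)⁻¹
    rw [Real.norm_eq_abs, abs_of_nonneg (B_nonneg γ y)]
    have hy0 : 0 < y := hy.1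
    have hy1 : y ≤ 1/2 := hy.2
    have hexp : Real.exp (γ * y) ≤ Real.exp |γ| := by
      apply Real.exp_le_exp.2
      calc γ * y ≤ |γ * y| := le_abs_self _
        _ = |γ| * |y| := abs_mul _ _
        _ ≤ |γ| * 1 := mul_le_mul_of_nonneg_left
            (by rw [abs_of_nonneg hy0.le]; linarith) (abs_nonneg _)
        _ = |γ| := mul_one _
    have hs : Real.sqrt y ≤ Real.sqrt 2 * Real.sqrt (y * (1 - y)) := by
      rw [← Real.sqrt_mul (by norm_num : (0:ℝ) ≤ 2)]
      exact Real.sqrt_le_sqrt (by nlinarith)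
    have hinv : (Real.sqrt (y * (1 - y)))⁻¹ ≤ Real.sqrt 2 * (Real.sqrt y)⁻¹ := by
      have hsy : 0 < Real.sqrt y := Real.sqrt_pos.2 hy0
      have hsyy : 0 < Real.sqrt (y * (1 - y)) :=
        Real.sqrt_pos.2 (by nlinarith)
      rw [show Real.sqrt 2 * (Real.sqrt y)⁻¹ = (Real.sqrt y / Real.sqrt 2)⁻¹ by
        rw [div_eq_mul_inv, mul_inv, inv_inv]; ring]
      apply inv_anti₀
      · positivity
      · rw [div_le_iff₀ (by positivity : (0:ℝ) < Real.sqrt 2)]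
        calc Real.sqrt y ≤ Real.sqrt 2 * Real.sqrt (y * (1-y)) := hs
          _ = Real.sqrt (y * (1-y)) * Real.sqrt 2 := by ring
    calc B γ y ≤ Real.exp |γ| * (Real.sqrt 2 * (Real.sqrt y)⁻¹) :=
        mul_le_mul hexp hinv (inv_nonneg.2 (Real.sqrt_nonneg _)) (Real.exp_pos _).le
      _ = (Real.exp |γ| * Real.sqrt 2) * (Real.sqrt y)⁻¹ := by ring

lemma B_intble_right (γ : ℝ) : IntervalIntegrable (B γ) volume (1/2) 1 := by
  apply IntervalIntegrable.mono_fun'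
    (g := fun y : ℝ => (Real.exp |γ| * Real.sqrt 2) * (Real.sqrt (1 - y))⁻¹)
  · have h := (invsqrt_intble.const_mul (Real.exp |γ| * Real.sqrt 2)).comp_sub_left 1
    have h2 : IntervalIntegrable
        (fun y : ℝ => (Real.exp |γ| * Real.sqrt 2) * (Real.sqrt (1 - y))⁻¹)
        volume (1 - 0) (1 - 1/2) := h
    norm_num at h2
    exact h2.symm
  · exact (B_meas γ).aestronglyMeasurable
  · refine (ae_restrict_iff' measurableSet_uIoc).2 (.of_forall fun y hy => ?_)
    rw [uIoc_of_le (by norm_num : (1/2:ℝ) ≤ 1)] at hy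
    show ‖B γ y‖ ≤ (Real.exp |γ| * Real.sqrt 2) * (Real.sqrt (1 - y))⁻¹
    rw [Real.norm_eq_abs, abs_of_nonneg (B_nonneg γ y)]
    have hy0 : 1/2 < y := hy.1
    have hy1 : y ≤ 1 := hy.2
    have hexp : Real.exp (γ * y) ≤ Real.exp |γ| := by
      apply Real.exp_le_exp.2
      calc γ * y ≤ |γ * y| := le_abs_self _
        _ = |γ| * |y| := abs_mul _ _
        _ ≤ |γ| * 1 := mul_le_mul_of_nonneg_left
            (by rw [abs_of_nonneg (by linarith)]; linarith) (abs_nonneg _)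
        _ = |γ| := mul_one _
    rcases eq_or_lt_of_le hy1 with h1 | h1
    · subst h1
      simp [B]
    · have hy1' : y < 1 := h1
      have hs : Real.sqrt (1 - y) ≤ Real.sqrt 2 * Real.sqrt (y * (1 - y)) := by
        rw [← Real.sqrt_mul (by norm_num : (0:ℝ) ≤ 2)]
        exact Real.sqrt_le_sqrt (by nlinarith)
      have hinv : (Real.sqrt (y * (1 - y)))⁻¹ ≤ Real.sqrt 2 * (Real.sqrt (1 - y))⁻¹ := by
        have hsy : 0 < Real.sqrt (1 - y) := Real.sqrt_pos.2 (by linarith)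
        have hsyy : 0 < Real.sqrt (y * (1 - y)) := Real.sqrt_pos.2 (by nlinarith)
        rw [show Real.sqrt 2 * (Real.sqrt (1-y))⁻¹ = (Real.sqrt (1-y) / Real.sqrt 2)⁻¹ by
          rw [div_eq_mul_inv, mul_inv, inv_inv]; ring]
        apply inv_anti₀
        · positivity
        · rw [div_le_iff₀ (by positivity : (0:ℝ) < Real.sqrt 2)]
          calc Real.sqrt (1-y) ≤ Real.sqrt 2 * Real.sqrt (y * (1-y)) := hs
            _ = Real.sqrt (y * (1-y)) * Real.sqrt 2 := by ring
      calc B γ y ≤ Real.exp |γ| * (Real.sqrt 2 * (Real.sqrt (1-y))⁻¹) :=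
          mul_le_mul hexp hinv (inv_nonneg.2 (Real.sqrt_nonneg _)) (Real.exp_pos _).le
        _ = (Real.exp |γ| * Real.sqrt 2) * (Real.sqrt (1-y))⁻¹ := by ring

lemma B_intble (γ : ℝ) : IntervalIntegrable (B γ) volume 0 1 :=
  (B_intble_left γ).trans (B_intble_right γ)

lemma mDens_nonneg (γ : ℝ) {y : ℝ} (h0 : 0 ≤ y) (h1 : y ≤ 1) : 0 ≤ mDens γ y :=
  div_nonneg (Real.exp_pos _).le (mul_nonneg h0 (by linarith))

lemma sqrt_mDens_le_B (γ : ℝ) {y : ℝ} (hy : y ∈ Ioc (0:ℝ) 1) :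
    Real.sqrt (y * (1 - y)) * mDens γ y ≤ B γ y := by
  rcases eq_or_lt_of_le hy.2 with h1 | h1
  · subst h1; simp [B, mDens]
  · have ht : 0 < y * (1 - y) := mul_pos hy.1 (by linarith)
    have hst : 0 < Real.sqrt (y * (1 - y)) := Real.sqrt_pos.2 ht
    apply le_of_eq
    unfold B mDens
    calc Real.sqrt (y * (1-y)) * (Real.exp (γ*y) / (y * (1-y)))
        = Real.exp (γ*y) * (Real.sqrt (y * (1-y)) * (y * (1-y))⁻¹) := by
          rw [div_eq_mul_inv]; ring
      _ = Real.exp (γ*y) * (Real.sqrt (y * (1-y))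
            * ((Real.sqrt (y * (1-y)))⁻¹ * (Real.sqrt (y * (1-y)))⁻¹)) := by
          rw [← mul_inv, Real.mul_self_sqrt ht.le]
      _ = Real.exp (γ*y) * ((Real.sqrt (y * (1-y)) * (Real.sqrt (y * (1-y)))⁻¹)
            * (Real.sqrt (y * (1-y)))⁻¹) := by ring
      _ = Real.exp (γ*y) * (Real.sqrt (y * (1-y)))⁻¹ := by
          rw [mul_inv_cancel₀ hst.ne', one_mul]

end GreenAux

open GreenAux

/-- there is a constant `C = C(γ)` such that every normalized
eigenfunction–eigenvalue pair `(α, λ)` of the Green operator satisfies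
`|α(x)| ≤ C λ² x(1−x)` on `[0,1]`. -/
theorem green_eigenfunction_bound (γ : ℝ) :
    ∃ C : ℝ, ∀ lam : ℝ, 0 < lam → ∀ α : ℝ → ℝ, Measurable α →
      (∫ y in (0 : ℝ)..1, α y ^ 2 * mDens γ y) = 1 →
      (∀ x ∈ Set.Icc (0 : ℝ) 1,
        α x = lam * ∫ y in (0 : ℝ)..1, gFn γ x y * α y * mDens γ y) →
      ∀ x ∈ Set.Icc (0 : ℝ) 1, |α x| ≤ C * lam ^ 2 * x * (1 - x) := by
  set E := Real.exp |γ| with hE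
  set s1 := sFn γ 1 with hs1def
  have hs1 : 0 < s1 := sFn_one_pos γ
  set cg : ℝ := E ^ 2 / s1 with hcg
  have hcg0 : 0 ≤ cg := by positivity
  set J : ℝ := ∫ y in (0:ℝ)..1, B γ y with hJdef
  have hJ0 : 0 ≤ J := intervalIntegral.integral_nonneg (by norm_num)
    (fun y _ => B_nonneg γ y)
  set A : ℝ := (cg/2) * (J + 1/2) with hA
  have hA0 : 0 ≤ A := by positivity
  refine ⟨cg * A * J, ?_⟩
  intro lam hlam α hmeas hnorm heig
  -- integrability of α² m'
  have hα2 : IntervalIntegrable (fun y => α y ^ 2 * mDens γ y) volume 0 1 := by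
    by_contra h
    rw [intervalIntegral.integral_undef h] at hnorm
    norm_num at hnorm
  -- the master g bound
  have hgle : ∀ x ∈ Icc (0:ℝ) 1, ∀ y ∈ Icc (0:ℝ) 1,
      gFn γ x y ≤ cg * (min x y * (1 - max x y)) := by
    intro x hx y hy
    exact gFn_le γ hx hy
  -- Step 1 : |α x| ≤ lam * (A * sqrt (x(1-x)))
  have step1 : ∀ x ∈ Icc (0:ℝ) 1, |α x| ≤ lam * (A * Real.sqrt (x * (1 - x))) := by
    intro x hx
    set c : ℝ := (cg/2) * Real.sqrt (x * (1 - x)) with hc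
    have hc0 : 0 ≤ c := by positivity
    set h1 : ℝ → ℝ := fun y => c * (B γ y + (1/2) * (α y ^ 2 * mDens γ y)) with hh1def
    have hh1 : IntervalIntegrable h1 volume 0 1 :=
      ((B_intble γ).add (hα2.const_mul (1/2))).const_mul c
    have hae : ∀ᵐ t ∂(volume.restrict (Set.uIoc (0:ℝ) 1)),
        ‖gFn γ x t * α t * mDens γ t‖ ≤ h1 t := by
      rw [uIoc_of_le (by norm_num : (0:ℝ) ≤ 1)]
      refine (ae_restrict_iff' measurableSet_Ioc).2 (.of_forall fun y hy => ?_)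
      have hyI : y ∈ Icc (0:ℝ) 1 := ⟨hy.1.le, hy.2⟩
      have hm' : 0 ≤ mDens γ y := mDens_nonneg γ hyI.1 hyI.2
      have hg0 : 0 ≤ gFn γ x y := gFn_nonneg γ hx hyI
      have hgs : gFn γ x y ≤ cg * (Real.sqrt (x * (1-x)) * Real.sqrt (y * (1-y))) := by
        calc gFn γ x y ≤ cg * (min x y * (1 - max x y)) := hgle x hx y hyI
          _ ≤ cg * (Real.sqrt (x * (1-x)) * Real.sqrt (y * (1-y))) :=
            mul_le_mul_of_nonneg_left (minmax_le_sqrt hx hyI) hcg0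
      have habs : |α y| ≤ (1 + α y ^ 2) / 2 := by
        nlinarith [sq_nonneg (|α y| - 1), sq_abs (α y)]
      have hBid : Real.sqrt (y * (1-y)) * mDens γ y ≤ B γ y := sqrt_mDens_le_B γ hy
      have hhalf : Real.sqrt (y * (1-y)) ≤ 1/2 := sqrt_le_half y
      rw [Real.norm_eq_abs, abs_mul, abs_mul, abs_of_nonneg hg0, abs_of_nonneg hm']
      have key1 : gFn γ x y * |α y| * mDens γ y
          ≤ (cg * (Real.sqrt (x * (1-x)) * Real.sqrt (y * (1-y)))) * ((1 + α y ^ 2)/2)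
            * mDens γ y := by
        apply mul_le_mul_of_nonneg_right _ hm'
        apply mul_le_mul hgs habs (abs_nonneg _)
        positivity
      have key2 : (cg * (Real.sqrt (x * (1-x)) * Real.sqrt (y * (1-y)))) * ((1 + α y ^ 2)/2)
            * mDens γ y ≤ h1 y := by
        have e1 : (cg * (Real.sqrt (x * (1-x)) * Real.sqrt (y * (1-y)))) * ((1 + α y ^ 2)/2)
            * mDens γ y
            = c * ((Real.sqrt (y * (1-y)) * mDens γ y)
              + Real.sqrt (y * (1-y)) * (α y ^ 2 * mDens γ y)) := by
          rw [hc]; ring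
        rw [e1, hh1def]
        apply mul_le_mul_of_nonneg_left _ hc0
        apply add_le_add hBid
        exact mul_le_mul_of_nonneg_right hhalf (mul_nonneg (sq_nonneg _) hm') |>.trans
          (le_of_eq rfl)
      exact key1.trans key2
    have hbound := intervalIntegral.norm_integral_le_abs_of_norm_le hae hh1
    have hcalc : (∫ y in (0:ℝ)..1, h1 y) = c * (J + 1/2) := by
      rw [hh1def]
      rw [intervalIntegral.integral_const_mul,
        intervalIntegral.integral_add (B_intble γ) (hα2.const_mul (1/2)),
        intervalIntegral.integral_const_mul, hnorm, ← hJdef]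
      ring
    rw [heig x hx, abs_mul, abs_of_pos hlam]
    apply mul_le_mul_of_nonneg_left _ hlam.le
    calc |∫ y in (0:ℝ)..1, gFn γ x y * α y * mDens γ y|
        ≤ |∫ y in (0:ℝ)..1, h1 y| := hbound
      _ = c * (J + 1/2) := by rw [hcalc, abs_of_nonneg (by positivity)]
      _ = A * Real.sqrt (x * (1-x)) := by rw [hA, hc]; ring
  -- Step 2
  intro x hx
  set c2 : ℝ := cg * (x * (1 - x)) * (lam * A) with hc2
  have hx0 : 0 ≤ x * (1 - x) := mul_nonneg hx.1 (by linarith [hx.2])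
  have hc20 : 0 ≤ c2 := by
    apply mul_nonneg (mul_nonneg hcg0 hx0)
    exact mul_nonneg hlam.le hA0
  have hh2 : IntervalIntegrable (fun y => c2 * B γ y) volume 0 1 :=
    (B_intble γ).const_mul c2
  have hae2 : ∀ᵐ t ∂(volume.restrict (Set.uIoc (0:ℝ) 1)),
      ‖gFn γ x t * α t * mDens γ t‖ ≤ c2 * B γ t := by
    rw [uIoc_of_le (by norm_num : (0:ℝ) ≤ 1)]
    refine (ae_restrict_iff' measurableSet_Ioc).2 (.of_forall fun y hy => ?_)
    have hyI : y ∈ Icc (0:ℝ) 1 := ⟨hy.1.le, hy.2⟩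
    have hm' : 0 ≤ mDens γ y := mDens_nonneg γ hyI.1 hyI.2
    have hg0 : 0 ≤ gFn γ x y := gFn_nonneg γ hx hyI
    have hgx : gFn γ x y ≤ cg * (x * (1-x)) := by
      calc gFn γ x y ≤ cg * (min x y * (1 - max x y)) := hgle x hx y hyI
        _ ≤ cg * (x * (1-x)) := mul_le_mul_of_nonneg_left (minmax_le_left hx hyI) hcg0
    have hBid : Real.sqrt (y * (1-y)) * mDens γ y ≤ B γ y := sqrt_mDens_le_B γ hy
    have hαy : |α y| ≤ lam * (A * Real.sqrt (y * (1-y))) := step1 y hyI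
    rw [Real.norm_eq_abs, abs_mul, abs_mul, abs_of_nonneg hg0, abs_of_nonneg hm']
    calc gFn γ x y * |α y| * mDens γ y
        ≤ (cg * (x * (1-x))) * (lam * (A * Real.sqrt (y * (1-y)))) * mDens γ y := by
          apply mul_le_mul_of_nonneg_right _ hm'
          apply mul_le_mul hgx hαy (abs_nonneg _) (mul_nonneg hcg0 hx0)
      _ = c2 * (Real.sqrt (y * (1-y)) * mDens γ y) := by rw [hc2]; ring
      _ ≤ c2 * B γ y := mul_le_mul_of_nonneg_left hBid hc20
  have hbound2 := intervalIntegral.norm_integral_le_abs_of_norm_le hae2 hh2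
  have hcalc2 : (∫ y in (0:ℝ)..1, c2 * B γ y) = c2 * J := by
    rw [intervalIntegral.integral_const_mul, ← hJdef]
  rw [heig x hx, abs_mul, abs_of_pos hlam]
  calc lam * |∫ y in (0:ℝ)..1, gFn γ x y * α y * mDens γ y|
      ≤ lam * |∫ y in (0:ℝ)..1, c2 * B γ y| :=
        mul_le_mul_of_nonneg_left hbound2 hlam.le
    _ = lam * (c2 * J) := by
        rw [hcalc2, abs_of_nonneg (mul_nonneg hc20 hJ0)]
    _ = cg * A * J * lam ^ 2 * x * (1 - x) := by rw [hc2]; ring
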